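/- Let U_V(t) ∈ ℝ^{n×r}, S_V(t) ∈ ℝ^{r×r}, V_V(t) ∈ ℝ^{m×r} be differentiable with U_VᵀU_V = I, V_VᵀV_V = I, and S_V invertible for all t. Suppose they satisfy the system U̇_V = −(I − U_V U_Vᵀ) G V_V S_V^{-1}, V̇_V = −(I − V_V V_Vᵀ) Gᵀ U_V S_V^{-T}, Ṡ_V = −γ S_V − U_Vᵀ G V_V, where G = G(t) ∈ ℝ^{n×m} and γ ∈ ℝ. Then V := U_V S_V V_Vᵀ satisfies V̇ = −γ V − P(V)G, where P(V)Z = U_V U_Vᵀ Z (I − V_V V_Vᵀ) + Z V_V V_Vᵀ. -/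

import Mathlib

open Matrix

attribute [local instance] Matrix.frobeniusNormedAddCommGroup Matrix.frobeniusNormedSpace

private lemma matmul_bilin (a b c : ℕ) :
    IsBoundedBilinearMap ℝ (fun p : Matrix (Fin a) (Fin b) ℝ × Matrix (Fin b) (Fin c) ℝ =>
      p.1 * p.2) where
  add_left x₁ x₂ y := Matrix.add_mul x₁ x₂ y
  smul_left c x y := Matrix.smul_mul c x y
  add_right x y₁ y₂ := Matrix.mul_add x y₁ y₂
  smul_right c x y := Matrix.mul_smul x c y
  bound := ⟨1, one_pos, fun x y => by
    simpa using Matrix.frobenius_norm_mul x y⟩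

private lemma hasDerivAt_matmul {a b c : ℕ} {A : ℝ → Matrix (Fin a) (Fin b) ℝ}
    {B : ℝ → Matrix (Fin b) (Fin c) ℝ} {A' B'} {t : ℝ}
    (hA : HasDerivAt A A' t) (hB : HasDerivAt B B' t) :
    HasDerivAt (fun s => A s * B s) (A t * B' + A' * B t) t := by
  have h := ((matmul_bilin a b c).hasFDerivAt (A t, B t)).comp_hasDerivAt t (hA.prodMk hB)
  simp at h
  exact h

private noncomputable def transposeCLM (a b : ℕ) :
    Matrix (Fin a) (Fin b) ℝ →L[ℝ] Matrix (Fin b) (Fin a) ℝ :=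
  LinearMap.mkContinuous
    { toFun := Matrix.transpose
      map_add' := fun x y => Matrix.transpose_add x y
      map_smul' := fun c x => Matrix.transpose_smul c x } 1
    (fun x => by simp [Matrix.frobenius_norm_transpose])

private lemma hasDerivAt_transpose {a b : ℕ} {A : ℝ → Matrix (Fin a) (Fin b) ℝ} {A'} {t : ℝ}
    (hA : HasDerivAt A A' t) :
    HasDerivAt (fun s => (A s)ᵀ) A'ᵀ t := by
  have h := (transposeCLM a b).hasFDerivAt.comp_hasDerivAt t hA
  exact h

/-- If the factors `U_V, S_V, V_V` satisfy the dynamical low-rank system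
`U̇_V = −(I − U_V U_Vᵀ) G V_V S_V⁻¹`, `V̇_V = −(I − V_V V_Vᵀ) Gᵀ U_V S_V⁻ᵀ`,
`Ṡ_V = −γ S_V − U_Vᵀ G V_V`, with orthonormal `U_V, V_V` and invertible `S_V`, then
`V = U_V S_V V_Vᵀ` satisfies `V̇ = −γ V − P(V) G`, where
`P(V)Z = U_V U_Vᵀ Z (I − V_V V_Vᵀ) + Z V_V V_Vᵀ`. -/
theorem lowrank_momentum_flow {n m r : ℕ}
    (UV : ℝ → Matrix (Fin n) (Fin r) ℝ)
    (SV : ℝ → Matrix (Fin r) (Fin r) ℝ)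
    (VV : ℝ → Matrix (Fin m) (Fin r) ℝ)
    (G : ℝ → Matrix (Fin n) (Fin m) ℝ) (γ : ℝ)
    (hUorth : ∀ t, (UV t)ᵀ * UV t = 1)
    (hVorth : ∀ t, (VV t)ᵀ * VV t = 1)
    (hSinv : ∀ t, IsUnit (SV t).det)
    (hU : ∀ t, HasDerivAt UV (-((1 - UV t * (UV t)ᵀ) * G t * VV t * (SV t)⁻¹)) t)
    (hV : ∀ t, HasDerivAt VV (-((1 - VV t * (VV t)ᵀ) * (G t)ᵀ * UV t * ((SV t)⁻¹)ᵀ)) t)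
    (hS : ∀ t, HasDerivAt SV (-(γ • SV t) - (UV t)ᵀ * G t * VV t) t) :
    ∀ t, HasDerivAt (fun s => UV s * SV s * (VV s)ᵀ)
      (-(γ • (UV t * SV t * (VV t)ᵀ)) -
        (UV t * (UV t)ᵀ * G t * (1 - VV t * (VV t)ᵀ) + G t * (VV t * (VV t)ᵀ))) t := by
  intro t
  have hUS := hasDerivAt_matmul (hU t) (hS t)
  have h := hasDerivAt_matmul hUS (hasDerivAt_transpose (hV t))
  convert h using 1
  have hS1 : (SV t)⁻¹ * SV t = 1 := Matrix.nonsing_inv_mul _ (hSinv t)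
  have hS2 : SV t * (SV t)⁻¹ = 1 := Matrix.mul_nonsing_inv _ (hSinv t)
  have e1 : ∀ X : Matrix (Fin r) (Fin m) ℝ, SV t * ((SV t)⁻¹ * X) = X := fun X => by
    rw [← Matrix.mul_assoc, hS2, Matrix.one_mul]
  have e2 : ∀ X : Matrix (Fin r) (Fin m) ℝ, (SV t)⁻¹ * (SV t * X) = X := fun X => by
    rw [← Matrix.mul_assoc, hS1, Matrix.one_mul]
  have e3 : ∀ X : Matrix (Fin r) (Fin m) ℝ, (UV t)ᵀ * (UV t * X) = X := fun X => by
    rw [← Matrix.mul_assoc, hUorth t, Matrix.one_mul]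
  simp only [Matrix.transpose_neg, Matrix.transpose_mul, Matrix.transpose_sub,
    Matrix.transpose_one, Matrix.transpose_transpose, Matrix.sub_mul, Matrix.mul_sub,
    Matrix.add_mul, Matrix.mul_add, Matrix.mul_one, Matrix.one_mul, Matrix.mul_neg,
    Matrix.neg_mul, Matrix.mul_assoc, Matrix.mul_smul, Matrix.smul_mul, e1, e2, e3]
  abel
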